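/- Let (M, g) be a Riemannian manifold, X a vector field, and ω a parallel p-form (p ≥ 1). Then Δ(ι(X)ω) = ι(ΔX)ω, where Δ denotes the Hodge Laplacian dd* + d*d acting on forms (with X identified with a 1-form via g). -/

import Mathlib

/- An algebraic (Koszul-style) model of a Riemannian manifold: the commutative
`ℝ`-algebra `A` plays the role of the ring of smooth functions, derivations of
`A` play the role of vector fields, `g` is the Riemannian metric, `nab` the
Levi-Civita connection (`A`-linear in the first slot, a derivation in the
second, metric and torsion-free), `e` a (local) orthonormal frame, and
`k`-forms are alternating `A`-multilinear functions
`(Fin k → Derivation ℝ A A) → A`. -/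

namespace RiemannModel

variable {A : Type*} [CommRing A] [Algebra ℝ A]

abbrev Forms (A : Type*) [CommRing A] [Algebra ℝ A] (k : ℕ) : Type _ :=
  (Fin k → Derivation ℝ A A) → A

variable (nab : Derivation ℝ A A → Derivation ℝ A A → Derivation ℝ A A)
variable (g : Derivation ℝ A A → Derivation ℝ A A → A)
variable {n : ℕ} (e : Fin n → Derivation ℝ A A)

/-- covariant derivative of a `k`-form -/
def covD {k : ℕ} (Y : Derivation ℝ A A) (ω : Forms A k) : Forms A k :=
  fun Z => Y (ω Z) - ∑ i, ω (Function.update Z i (nab Y (Z i)))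

/-- interior multiplication of a `(k+1)`-form with a vector field -/
def contr {k : ℕ} (X : Derivation ℝ A A) (ω : Forms A (k + 1)) : Forms A k :=
  fun Z => ω (Fin.cons X Z)

/-- exterior derivative (via the torsion-free connection `nab`) -/
def extd {k : ℕ} (ω : Forms A k) : Forms A (k + 1) :=
  fun Z => ∑ i : Fin (k + 1), (-1 : A) ^ (i : ℕ) * covD nab (Z i) ω (Z ∘ i.succAbove)

/-- codifferential `d*ω = -∑ᵢ ι(eᵢ)∇_{eᵢ}ω` on `(k+1)`-forms -/
def codiffS {k : ℕ} (ω : Forms A (k + 1)) : Forms A k :=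
  -(∑ i, contr (e i) (covD nab (e i) ω))

/-- curvature operator on forms -/
def Rform {k : ℕ} (X Y : Derivation ℝ A A) (ω : Forms A k) : Forms A k :=
  covD nab X (covD nab Y ω) - covD nab Y (covD nab X ω) - covD nab ⁅X, Y⁆ ω

/-- curvature operator on vector fields -/
def Rvec (X Y Z : Derivation ℝ A A) : Derivation ℝ A A :=
  nab X (nab Y Z) - nab Y (nab X Z) - nab ⁅X, Y⁆ Z

/-- the Ricci endomorphism `Ric(X) = ∑ᵢ R(X, eᵢ)eᵢ` -/
def ricci (X : Derivation ℝ A A) : Derivation ℝ A A :=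
  ∑ i, Rvec nab X (e i) (e i)

/-- the metric dual `1`-form of a vector field -/
def flat (X : Derivation ℝ A A) : Forms A 1 := fun Z => g X (Z 0)

/-- wedge product of a `1`-form with a `k`-form -/
def wedge1 {k : ℕ} (α : Forms A 1) (ω : Forms A k) : Forms A (k + 1) :=
  fun Z => ∑ i : Fin (k + 1), (-1 : A) ^ (i : ℕ) * α (fun _ => Z i) * ω (Z ∘ i.succAbove)

/-- gradient -/
def grad (f : A) : Derivation ℝ A A := ∑ i, (e i) f • e i

/-- Laplacian on functions, `Δ f = -tr Hess f` -/
def lapl (f : A) : A := -(∑ i, ((e i) ((e i) f) - (nab (e i) (e i)) f))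

/-- musical isomorphism: vector field associated to a `1`-form -/
def sharp (α : Forms A 1) : Derivation ℝ A A := ∑ i, α (fun _ => e i) • e i

/-- pointwise inner product of `k`-forms -/
noncomputable def finner {k : ℕ} (ω η : Forms A k) : A :=
  algebraMap ℝ A (1 / (Nat.factorial k : ℝ)) *
    ∑ z : Fin k → Fin n, ω (fun a => e (z a)) * η (fun a => e (z a))

/-- auxiliary: `Y♭ ∧ d*η` (zero on `0`-forms, where `d* = 0`) -/
def wedgeCod : ∀ {k : ℕ}, Forms A k → Derivation ℝ A A → Forms A k
  | 0, _, _ => 0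
  | _ + 1, η, Y => wedge1 (flat g Y) (codiffS nab e η)

/-- the `T^{k,1}`-component of the covariant derivative of a `k`-form:
`T(η)(Y) = ∇_Y η - (1/(k+1)) ι(Y)(dη) + (1/(n-k+1)) Y♭ ∧ d*η` -/
noncomputable def Tform {k : ℕ} (η : Forms A k) (Y : Derivation ℝ A A) : Forms A k :=
  covD nab Y η - algebraMap ℝ A (1 / ((k : ℝ) + 1)) • contr Y (extd nab η) +
    algebraMap ℝ A (1 / ((n : ℝ) - k + 1)) • wedgeCod nab g e η Y

/-- Hodge Laplacian `Δ = d d* + d* d` -/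
def hodgeLap : ∀ {k : ℕ}, Forms A k → Forms A k
  | 0, ω => codiffS nab e (extd nab ω)
  | _ + 1, ω => codiffS nab e (extd nab ω) + extd nab (codiffS nab e ω)

/-- the Weitzenböck curvature operator `ℛ_k` -/
def Rcal : ∀ {k : ℕ}, Forms A k → Forms A k
  | 0, _ => 0
  | _ + 1, η =>
    -(∑ i, ∑ j, wedge1 (flat g (e i)) (contr (e j) (Rform nab (e i) (e j) η)))

set_option linter.unusedSectionVars false

section Helpers

private lemma fun_sum {M N ι : Type*} [AddCommMonoid M] [AddCommMonoid N]
    (F : M → N) (h0 : F 0 = 0) (hadd : ∀ x y, F (x + y) = F x + F y)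
    (s : Finset ι) (V : ι → M) : F (∑ i ∈ s, V i) = ∑ i ∈ s, F (V i) := by
  classical
  induction s using Finset.induction_on with
  | empty => simpa
  | insert _ _ hx ih => rw [Finset.sum_insert hx, hadd, ih, Finset.sum_insert hx]

private lemma two_cancel {x y : A} (h : x + x = y + y) : x = y := by
  have h2 : (2:ℝ) • x = (2:ℝ) • y := by rw [two_smul, two_smul]; exact h
  have h3 := congrArg (fun z => (2⁻¹ : ℝ) • z) h2
  simpa [smul_smul] using h3

private lemma double_cancel {q : ℕ} (f h : Fin q → Fin q → A)
    (hoff : ∀ k m, k ≠ m → f k m = h m k) :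
    (∑ k, ∑ m, f k m) - (∑ k, ∑ m, h k m) = ∑ k, (f k k - h k k) := by
  have hs : ∑ k, ∑ m, h k m = ∑ k, ∑ m, h m k := Finset.sum_comm
  rw [hs, ← Finset.sum_sub_distrib]
  refine Finset.sum_congr rfl fun k _ => ?_
  rw [← Finset.sum_sub_distrib]
  refine Finset.sum_eq_single k (fun m _ hm => by
    rw [hoff k m (Ne.symm hm), sub_self]) (fun hk => absurd (Finset.mem_univ k) hk)

end Helpers
/-- bundle of the geometric hypotheses -/
structure Geo (nab : Derivation ℝ A A → Derivation ℝ A A → Derivation ℝ A A)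
    (g : Derivation ℝ A A → Derivation ℝ A A → A)
    {n : ℕ} (e : Fin n → Derivation ℝ A A) : Prop where
  g_symm : ∀ X Y : Derivation ℝ A A, g X Y = g Y X
  g_add : ∀ X Y Z : Derivation ℝ A A, g (X + Y) Z = g X Z + g Y Z
  g_smul : ∀ (a : A) (X Y : Derivation ℝ A A), g (a • X) Y = a * g X Y
  nab_add₁ : ∀ X Y Z : Derivation ℝ A A, nab (X + Y) Z = nab X Z + nab Y Z
  nab_smul₁ : ∀ (a : A) (X Y : Derivation ℝ A A), nab (a • X) Y = a • nab X Y
  nab_add₂ : ∀ X Y Z : Derivation ℝ A A, nab X (Y + Z) = nab X Y + nab X Z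
  nab_leibniz : ∀ (a : A) (X Y : Derivation ℝ A A), nab X (a • Y) = X a • Y + a • nab X Y
  nab_metric : ∀ X Y Z : Derivation ℝ A A, X (g Y Z) = g (nab X Y) Z + g Y (nab X Z)
  nab_torsion : ∀ X Y : Derivation ℝ A A, nab X Y - nab Y X = ⁅X, Y⁆
  e_orth : ∀ i j, g (e i) (e j) = if i = j then 1 else 0
  e_expand : ∀ X : Derivation ℝ A A, X = ∑ i, g X (e i) • e i

section CurvHelpers

variable (hgeo : Geo nab g e)
include hgeo

private lemma g_zero₁ (Y : Derivation ℝ A A) : g 0 Y = 0 := by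
  have := hgeo.g_smul 0 0 Y; simpa using this

private lemma g_neg₁ (X Y : Derivation ℝ A A) : g (-X) Y = -g X Y := by
  rw [← neg_one_smul A X, hgeo.g_smul]; ring

private lemma g_sub₁ (X Y Z : Derivation ℝ A A) : g (X - Y) Z = g X Z - g Y Z := by
  rw [sub_eq_add_neg, hgeo.g_add, g_neg₁ nab g e hgeo]; ring

private lemma g_sum₁ {ι : Type*} (s : Finset ι) (V : ι → Derivation ℝ A A)
    (Y : Derivation ℝ A A) : g (∑ i ∈ s, V i) Y = ∑ i ∈ s, g (V i) Y :=
  fun_sum (fun v => g v Y) (g_zero₁ nab g e hgeo Y) (fun x y => hgeo.g_add x y Y) s V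

private lemma g_zero₂ (X : Derivation ℝ A A) : g X 0 = 0 := by
  rw [hgeo.g_symm]; exact g_zero₁ nab g e hgeo X

private lemma g_add₂ (X Y Z : Derivation ℝ A A) : g X (Y + Z) = g X Y + g X Z := by
  rw [hgeo.g_symm, hgeo.g_add, hgeo.g_symm Y X, hgeo.g_symm Z X]

private lemma g_smul₂ (a : A) (X Y : Derivation ℝ A A) : g X (a • Y) = a * g X Y := by
  rw [hgeo.g_symm, hgeo.g_smul, hgeo.g_symm]

private lemma nab_zero₁ (Y : Derivation ℝ A A) : nab 0 Y = 0 := by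
  have := hgeo.nab_smul₁ 0 0 Y; simpa using this

private lemma nab_neg₁ (X Y : Derivation ℝ A A) : nab (-X) Y = -nab X Y := by
  rw [← neg_one_smul A X, hgeo.nab_smul₁, neg_one_smul]

private lemma nab_sum₁ {ι : Type*} (s : Finset ι) (V : ι → Derivation ℝ A A)
    (Y : Derivation ℝ A A) : nab (∑ i ∈ s, V i) Y = ∑ i ∈ s, nab (V i) Y :=
  fun_sum (fun v => nab v Y) (nab_zero₁ nab g e hgeo Y) (fun x y => hgeo.nab_add₁ x y Y) s V

private lemma nab_sub₁ (X Y Z : Derivation ℝ A A) : nab (X - Y) Z = nab X Z - nab Y Z := by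
  rw [sub_eq_add_neg, hgeo.nab_add₁, nab_neg₁ nab g e hgeo, sub_eq_add_neg]

private lemma nab_neg₂ (X Y : Derivation ℝ A A) : nab X (-Y) = -nab X Y := by
  have h := hgeo.nab_leibniz (-1 : A) X Y
  have hx : X (-1 : A) = 0 := by
    have h1 : X (1 : A) = 0 := Derivation.map_one_eq_zero X
    have := map_neg X (1 : A)
    rw [h1] at this
    simpa using this
  rw [neg_one_smul] at h
  rw [h, hx, neg_one_smul, zero_smul, zero_add]

private lemma nab_sub₂ (X Y Z : Derivation ℝ A A) : nab X (Y - Z) = nab X Y - nab X Z := by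
  rw [sub_eq_add_neg, hgeo.nab_add₂, nab_neg₂ nab g e hgeo, sub_eq_add_neg]

omit hgeo in
private lemma jacobiD (X Y Z : Derivation ℝ A A) :
    ⁅X, ⁅Y, Z⁆⁆ + ⁅Y, ⁅Z, X⁆⁆ + ⁅Z, ⁅X, Y⁆⁆ = 0 := by
  ext a
  simp only [Derivation.commutator_apply, Derivation.add_apply, Derivation.zero_apply, map_sub]
  ring

private lemma bianchi (Y W V : Derivation ℝ A A) :
    Rvec nab Y W V + Rvec nab W V Y + Rvec nab V Y W = 0 := by
  have key : ∀ a b c : Derivation ℝ A A, nab a ⁅b, c⁆ = nab a (nab b c) - nab a (nab c b) :=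
    fun a b c => by rw [← hgeo.nab_torsion, nab_sub₂ nab g e hgeo]
  have e1 : Rvec nab Y W V + Rvec nab W V Y + Rvec nab V Y W
      = (nab Y ⁅W,V⁆ - nab ⁅W,V⁆ Y) + (nab W ⁅V,Y⁆ - nab ⁅V,Y⁆ W) +
        (nab V ⁅Y,W⁆ - nab ⁅Y,W⁆ V) := by
    simp only [Rvec, key]; abel
  rw [e1, hgeo.nab_torsion, hgeo.nab_torsion, hgeo.nab_torsion]
  exact jacobiD Y W V

private lemma Rg2 (Y W U V : Derivation ℝ A A) :
    g (Rvec nab Y W U) V = - g (Rvec nab Y W V) U := by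
  have c1 : Y (W (g U V)) = g (nab Y (nab W U)) V + g (nab W U) (nab Y V) +
      (g (nab Y U) (nab W V) + g U (nab Y (nab W V))) := by
    rw [hgeo.nab_metric W U V, map_add, hgeo.nab_metric Y (nab W U) V,
      hgeo.nab_metric Y U (nab W V)]
  have c2 : W (Y (g U V)) = g (nab W (nab Y U)) V + g (nab Y U) (nab W V) +
      (g (nab W U) (nab Y V) + g U (nab W (nab Y V))) := by
    rw [hgeo.nab_metric Y U V, map_add, hgeo.nab_metric W (nab Y U) V,
      hgeo.nab_metric W U (nab Y V)]
  have c3 : (⁅Y, W⁆ : Derivation ℝ A A) (g U V) = g (nab ⁅Y,W⁆ U) V + g U (nab ⁅Y,W⁆ V) :=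
    hgeo.nab_metric _ _ _
  have c4 : (⁅Y, W⁆ : Derivation ℝ A A) (g U V) = Y (W (g U V)) - W (Y (g U V)) :=
    Derivation.commutator_apply ..
  simp only [Rvec, g_sub₁ nab g e hgeo]
  have s1 := hgeo.g_symm U (nab Y (nab W V))
  have s2 := hgeo.g_symm U (nab W (nab Y V))
  have s3 := hgeo.g_symm U (nab ⁅Y,W⁆ V)
  linear_combination -c1 + c2 + c3 - c4 - s1 + s2 + s3

private lemma Rvec_swap (Y W V : Derivation ℝ A A) :
    Rvec nab Y W V = - Rvec nab W Y V := by
  have hb : (⁅W, Y⁆ : Derivation ℝ A A) = -⁅Y, W⁆ := by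
    ext a; simp only [Derivation.commutator_apply, Derivation.neg_apply]; ring
  simp only [Rvec, hb, nab_neg₁ nab g e hgeo]
  abel

private lemma Rg_pair (a b c d : Derivation ℝ A A) :
    g (Rvec nab a b c) d = g (Rvec nab c d a) b := by
  have S : ∀ x y z w : Derivation ℝ A A,
      g (Rvec nab x y z) w + g (Rvec nab y z x) w + g (Rvec nab z x y) w = 0 := by
    intro x y z w
    have hb := congrArg (fun u => g u w) (bianchi nab g e hgeo x y z)
    simpa [hgeo.g_add, g_zero₁ nab g e hgeo] using hb
  have A1 : ∀ x y z w : Derivation ℝ A A,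
      g (Rvec nab x y z) w = - g (Rvec nab y x z) w := by
    intro x y z w
    rw [Rvec_swap nab g e hgeo x y z, g_neg₁ nab g e hgeo]
  have A2 : ∀ x y z w : Derivation ℝ A A,
      g (Rvec nab x y z) w = - g (Rvec nab x y w) z :=
    fun x y z w => Rg2 nab g e hgeo x y z w
  have S1 := S b c d a
  have S2 := S c d a b
  have S3 := S d a b c
  have S4 := S a b c d
  have n3 : g (Rvec nab d b c) a = g (Rvec nab b d a) c := by
    rw [A2 d b c a, A1 d b a c, neg_neg]
  have n4 : g (Rvec nab d a c) b = g (Rvec nab a d b) c := by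
    rw [A1 d a c b, A2 a d c b, neg_neg]
  rw [A2 b c d a, A2 c d b a, n3] at S1
  rw [n4, A2 a c d b] at S2
  rw [A1 d a b c, A2 a b d c] at S3
  rw [A1 c a b d] at S4
  exact two_cancel (by linear_combination S1 - S2 - S3 + S4)

end CurvHelpers
section OmegaHelpers

variable {q : ℕ} (Ω : AlternatingMap A (Derivation ℝ A A) A (Fin (q + 1)))

private lemma Om_upd_smul (Z : Fin (q+1) → Derivation ℝ A A) (i : Fin (q+1))
    (a : A) (x : Derivation ℝ A A) :
    Ω (Function.update Z i (a • x)) = a * Ω (Function.update Z i x) := by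
  rw [Ω.map_update_smul]; rfl

private lemma Om_upd_sub (Z : Fin (q+1) → Derivation ℝ A A) (i : Fin (q+1))
    (x y : Derivation ℝ A A) :
    Ω (Function.update Z i (x - y)) =
      Ω (Function.update Z i x) - Ω (Function.update Z i y) :=
  Ω.toMultilinearMap.map_update_sub Z i x y

private lemma Om_upd_sum {ι : Type*} (s : Finset ι) (Z : Fin (q+1) → Derivation ℝ A A)
    (i : Fin (q+1)) (V : ι → Derivation ℝ A A) :
    Ω (Function.update Z i (∑ j ∈ s, V j)) = ∑ j ∈ s, Ω (Function.update Z i (V j)) :=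
  Ω.toMultilinearMap.map_update_sum s i V Z

private lemma Om_cons_zero (Z : Fin q → Derivation ℝ A A) :
    Ω (Fin.cons 0 Z) = 0 := by
  have h : Fin.cons (0 : Derivation ℝ A A) Z
      = Function.update (Fin.cons (0 : Derivation ℝ A A) Z : Fin (q+1) → Derivation ℝ A A) 0 (0 : Derivation ℝ A A) := by rw [Fin.update_cons_zero]
  rw [h]; exact Ω.toMultilinearMap.map_update_zero _ _

private lemma Om_cons_smul (a : A) (V : Derivation ℝ A A) (Z : Fin q → Derivation ℝ A A) :
    Ω (Fin.cons (a • V) Z) = a * Ω (Fin.cons V Z) := by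
  have h : Fin.cons (a • V) Z = Function.update (Fin.cons V Z : Fin (q+1) → Derivation ℝ A A) 0 (a • V) := by
    rw [Fin.update_cons_zero]
  rw [h, Om_upd_smul, Fin.update_cons_zero]

private lemma Om_cons_add (V U : Derivation ℝ A A) (Z : Fin q → Derivation ℝ A A) :
    Ω (Fin.cons (V + U) Z) = Ω (Fin.cons V Z) + Ω (Fin.cons U Z) := by
  have h : Fin.cons (V + U) Z = Function.update (Fin.cons V Z : Fin (q+1) → Derivation ℝ A A) 0 (V + U) := by
    rw [Fin.update_cons_zero]
  rw [h, Ω.map_update_add, Fin.update_cons_zero, Fin.update_cons_zero]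

private lemma Om_cons_sub (V U : Derivation ℝ A A) (Z : Fin q → Derivation ℝ A A) :
    Ω (Fin.cons (V - U) Z) = Ω (Fin.cons V Z) - Ω (Fin.cons U Z) := by
  have h : Fin.cons (V - U) Z = Function.update (Fin.cons V Z : Fin (q+1) → Derivation ℝ A A) 0 (V - U) := by
    rw [Fin.update_cons_zero]
  rw [h, Om_upd_sub, Fin.update_cons_zero, Fin.update_cons_zero]

private lemma Om_cons_neg (V : Derivation ℝ A A) (Z : Fin q → Derivation ℝ A A) :
    Ω (Fin.cons (-V) Z) = -Ω (Fin.cons V Z) := by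
  have h := Om_cons_sub Ω 0 V Z
  simpa [Om_cons_zero] using h

private lemma Om_cons_sum {ι : Type*} (s : Finset ι) (V : ι → Derivation ℝ A A)
    (Z : Fin q → Derivation ℝ A A) :
    Ω (Fin.cons (∑ j ∈ s, V j) Z) = ∑ j ∈ s, Ω (Fin.cons (V j) Z) :=
  fun_sum (fun v => Ω (Fin.cons v Z)) (Om_cons_zero Ω Z) (fun x y => Om_cons_add Ω x y Z) s V

private lemma Om_move (W : Fin (q+1) → Derivation ℝ A A) (i : Fin (q+1)) :
    Ω W = (-1:A)^(i:ℕ) * Ω (Fin.cons (W i) (W ∘ i.succAbove)) := by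
  have hu : (Fin.cons (W i) (W ∘ i.succAbove) : Fin (q+1) → Derivation ℝ A A)
      ∘ (Fin.cycleRange i) = W := by
    funext x
    induction x using Fin.succAboveCases (i := i) with
    | x => simp [Fin.cycleRange_self]
    | p j => simp [Fin.cycleRange_succAbove]
  have hperm := Ω.map_perm (Fin.cons (W i) (W ∘ i.succAbove)) (Fin.cycleRange i)
  rw [hu, Fin.sign_cycleRange] at hperm
  rw [hperm, Units.smul_def]
  have hc : (((-1:ℤˣ)^(i:ℕ) : ℤˣ) : ℤ) = (-1 : ℤ)^(i:ℕ) := by push_cast; ring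
  rw [hc, zsmul_eq_mul]
  push_cast
  ring

private lemma Om_cons_swap (Z : Fin q → Derivation ℝ A A) (m : Fin q)
    (V U : Derivation ℝ A A) :
    Ω (Fin.cons V (Function.update Z m U)) = -Ω (Fin.cons U (Function.update Z m V)) := by
  have h : Fin.cons U (Function.update Z m V)
      = (Fin.cons V (Function.update Z m U)) ∘ (Equiv.swap 0 m.succ) := by
    funext x
    simp only [Function.comp_apply]
    rcases eq_or_ne x 0 with rfl | hx0
    · rw [Equiv.swap_apply_left, Fin.cons_zero, Fin.cons_succ, Function.update_self]
    rcases eq_or_ne x m.succ with rfl | hxm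
    · rw [Equiv.swap_apply_right, Fin.cons_succ, Function.update_self, Fin.cons_zero]
    · rw [Equiv.swap_apply_of_ne_of_ne hx0 hxm]
      obtain ⟨j, rfl⟩ := Fin.exists_succ_eq_of_ne_zero hx0
      have hjm : j ≠ m := fun hc => hxm (by rw [hc])
      rw [Fin.cons_succ, Fin.cons_succ, Function.update_of_ne hjm, Function.update_of_ne hjm]
  rw [h, AlternatingMap.map_swap Ω _ (Fin.succ_ne_zero m).symm, neg_neg]

end OmegaHelpers

section FrameTrick

private lemma frame_trick (hgeo : Geo nab g e) (B : Derivation ℝ A A → Derivation ℝ A A → A)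
    (hB2z : ∀ x, B x 0 = 0)
    (hB2a : ∀ x w₁ w₂, B x (w₁ + w₂) = B x w₁ + B x w₂)
    (hB2s : ∀ a x w, B x (a • w) = a * B x w)
    (hB1z : ∀ w, B 0 w = 0)
    (hB1a : ∀ x y w, B (x + y) w = B x w + B y w)
    (hB1s : ∀ a x w, B (a • x) w = a * B x w)
    (X Y : Derivation ℝ A A) :
    ∑ i, B (nab (e i) X) (nab Y (e i)) = -∑ i, B (nab (nab Y (e i)) X) (e i) := by
  have h0 : ∀ i j, g (nab Y (e i)) (e j) = - g (nab Y (e j)) (e i) := by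
    intro i j
    have hm := hgeo.nab_metric Y (e i) (e j)
    have hz : Y (g (e i) (e j)) = 0 := by rw [hgeo.e_orth]; split_ifs <;> simp
    have hs := hgeo.g_symm (e i) (nab Y (e j))
    linear_combination hz - hm - hs
  calc ∑ i, B (nab (e i) X) (nab Y (e i))
      = ∑ i, ∑ j, g (nab Y (e i)) (e j) * B (nab (e i) X) (e j) := by
        refine Finset.sum_congr rfl fun i _ => ?_
        conv_lhs => rw [hgeo.e_expand (nab Y (e i))]
        rw [fun_sum (fun w => B (nab (e i) X) w) (hB2z _) (hB2a _) _ _]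
        exact Finset.sum_congr rfl fun j _ => hB2s _ _ _
    _ = ∑ j, ∑ i, -(g (nab Y (e j)) (e i) * B (nab (e i) X) (e j)) := by
        rw [Finset.sum_comm]
        refine Finset.sum_congr rfl fun j _ => Finset.sum_congr rfl fun i _ => ?_
        rw [h0 i j]; ring
    _ = -∑ j, B (nab (nab Y (e j)) X) (e j) := by
        have hj : ∀ j : Fin n, ∑ i, -(g (nab Y (e j)) (e i) * B (nab (e i) X) (e j))
            = -(B (nab (nab Y (e j)) X) (e j)) := by
          intro j
          rw [Finset.sum_neg_distrib, neg_inj]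
          conv_rhs => rw [hgeo.e_expand (nab Y (e j))]
          rw [nab_sum₁ nab g e hgeo,
            fun_sum (fun v => B v (e j)) (hB1z _) (fun x y => hB1a x y _) _ _]
          refine Finset.sum_congr rfl fun i _ => ?_
          rw [hgeo.nab_smul₁, hB1s]
        rw [Finset.sum_congr rfl fun j _ => hj j, Finset.sum_neg_distrib]

end FrameTrick
section ParallelCore

/-- the second covariant derivative `∇²_{Y,W} X` -/
private def sder (X Y W : Derivation ℝ A A) : Derivation ℝ A A :=
  nab Y (nab W X) - nab (nab Y W) X

private lemma sder_sub (hgeo : Geo nab g e) (X Y W : Derivation ℝ A A) :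
    sder nab X Y W - sder nab X W Y = Rvec nab Y W X := by
  simp only [sder, Rvec]
  rw [← hgeo.nab_torsion Y W, nab_sub₁ nab g e hgeo]
  abel

variable {q : ℕ}
variable (Ω : AlternatingMap A (Derivation ℝ A A) A (Fin (q + 1)))
variable (hpar : ∀ (Y : Derivation ℝ A A) (Z : Fin (q + 1) → Derivation ℝ A A),
    Y (Ω Z) = ∑ k, Ω (Function.update Z k (nab Y (Z k))))
include hpar

private lemma covD_contr (V Y : Derivation ℝ A A) :
    covD nab Y (contr V ⇑Ω) = contr (nab Y V) ⇑Ω := by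
  funext Z
  simp only [covD, contr]
  rw [hpar Y (Fin.cons V Z), Fin.sum_univ_succ]
  simp only [Fin.cons_zero, Fin.cons_succ, Fin.update_cons_zero, ← Fin.cons_update]
  ring

private lemma extd_contr (X : Derivation ℝ A A) (Z : Fin (q+1) → Derivation ℝ A A) :
    extd nab (contr X ⇑Ω) Z = ∑ j, Ω (Function.update Z j (nab (Z j) X)) := by
  simp only [extd]
  refine Finset.sum_congr rfl fun i _ => ?_
  rw [covD_contr nab Ω hpar X (Z i)]
  simp only [contr]
  have hW0 : Function.update Z i (nab (Z i) X) i = nab (Z i) X := Function.update_self ..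
  have hWs : (Function.update Z i (nab (Z i) X)) ∘ i.succAbove = Z ∘ i.succAbove := by
    funext j
    simp [Function.update_of_ne (Fin.succAbove_ne i j)]
  have hm := Om_move Ω (Function.update Z i (nab (Z i) X)) i
  rw [hW0, hWs] at hm
  rw [hm]

private lemma covD_extd_contr (X Y : Derivation ℝ A A) (Z : Fin (q+1) → Derivation ℝ A A) :
    covD nab Y (extd nab (contr X ⇑Ω)) Z
      = ∑ j, Ω (Function.update Z j (sder nab X Y (Z j))) := by
  simp only [covD]
  simp only [extd_contr nab Ω hpar X]
  rw [map_sum]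
  simp only [hpar Y]
  rw [double_cancel _ _ (fun k m hk => ?_)]
  · refine Finset.sum_congr rfl fun j _ => ?_
    rw [Function.update_self, Function.update_idem, Function.update_idem,
      ← Om_upd_sub Ω, Function.update_self]
    rfl
  · rw [Function.update_of_ne (Ne.symm hk) _ Z, Function.update_of_ne hk _ Z,
      Function.update_comm hk]

private lemma dsd_contr (X : Derivation ℝ A A) (Z : Fin q → Derivation ℝ A A) :
    codiffS nab e (extd nab (contr X ⇑Ω)) Z
      = Ω (Fin.cons (-(∑ i, sder nab X (e i) (e i))) Z)
        - ∑ i, ∑ m, Ω (Fin.cons (e i) (Function.update Z m (sder nab X (e i) (Z m)))) := by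
  simp only [codiffS, Pi.neg_apply, Finset.sum_apply, contr]
  simp only [covD_extd_contr nab Ω hpar X]
  have hsplit : ∀ i : Fin n,
      (∑ j : Fin (q+1), Ω (Function.update (Fin.cons (e i) Z) j
          (sder nab X (e i) ((Fin.cons (e i) Z : Fin (q+1) → Derivation ℝ A A) j))))
        = Ω (Fin.cons (sder nab X (e i) (e i)) Z)
          + ∑ m, Ω (Fin.cons (e i) (Function.update Z m (sder nab X (e i) (Z m)))) := by
    intro i
    rw [Fin.sum_univ_succ]
    simp only [Fin.cons_zero, Fin.cons_succ, Fin.update_cons_zero, ← Fin.cons_update]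
  rw [Finset.sum_congr rfl fun i _ => hsplit i, Finset.sum_add_distrib, neg_add,
    Om_cons_neg Ω, Om_cons_sum Ω]
  ring

private lemma curvK (Y W : Derivation ℝ A A) (Z : Fin (q+1) → Derivation ℝ A A) :
    ∑ k, Ω (Function.update Z k (Rvec nab Y W (Z k))) = 0 := by
  have hR : ∀ k, Ω (Function.update Z k (Rvec nab Y W (Z k)))
      = Ω (Function.update Z k (nab Y (nab W (Z k))))
        - Ω (Function.update Z k (nab W (nab Y (Z k))))
        - Ω (Function.update Z k (nab ⁅Y,W⁆ (Z k))) := by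
    intro k
    simp only [Rvec, Om_upd_sub]
  rw [Finset.sum_congr rfl fun k _ => hR k, Finset.sum_sub_distrib, Finset.sum_sub_distrib]
  have hc : ∑ k, Ω (Function.update Z k (nab ⁅Y,W⁆ (Z k)))
      = (⁅Y,W⁆ : Derivation ℝ A A) (Ω Z) := (hpar _ Z).symm
  have hYW : Y (W (Ω Z)) = ∑ k, ∑ m, Ω (Function.update (Function.update Z k (nab W (Z k))) m
      (nab Y (Function.update Z k (nab W (Z k)) m))) := by
    rw [hpar W Z, map_sum]
    exact Finset.sum_congr rfl fun k _ => hpar Y _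
  have hWY : W (Y (Ω Z)) = ∑ k, ∑ m, Ω (Function.update (Function.update Z k (nab Y (Z k))) m
      (nab W (Function.update Z k (nab Y (Z k)) m))) := by
    rw [hpar Y Z, map_sum]
    exact Finset.sum_congr rfl fun k _ => hpar W _
  have hoff : ∀ k m : Fin (q+1), k ≠ m →
      Ω (Function.update (Function.update Z k (nab W (Z k))) m
        (nab Y (Function.update Z k (nab W (Z k)) m)))
      = Ω (Function.update (Function.update Z m (nab Y (Z m))) k
        (nab W (Function.update Z m (nab Y (Z m)) k))) := by
    intro k m hk
    rw [Function.update_of_ne (Ne.symm hk) _ Z, Function.update_of_ne hk _ Z,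
      Function.update_comm hk]
  have hdc := double_cancel
    (fun k m => Ω (Function.update (Function.update Z k (nab W (Z k))) m
      (nab Y (Function.update Z k (nab W (Z k)) m))))
    (fun k m => Ω (Function.update (Function.update Z k (nab Y (Z k))) m
      (nab W (Function.update Z k (nab Y (Z k)) m))))
    hoff
  rw [← hYW, ← hWY] at hdc
  have hcomm : (⁅Y,W⁆ : Derivation ℝ A A) (Ω Z) = Y (W (Ω Z)) - W (Y (Ω Z)) :=
    Derivation.commutator_apply ..
  have hdiag : ∀ k : Fin (q+1),
      Ω (Function.update (Function.update Z k (nab W (Z k))) k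
          (nab Y (Function.update Z k (nab W (Z k)) k)))
        - Ω (Function.update (Function.update Z k (nab Y (Z k))) k
          (nab W (Function.update Z k (nab Y (Z k)) k)))
      = Ω (Function.update Z k (nab Y (nab W (Z k))))
        - Ω (Function.update Z k (nab W (nab Y (Z k)))) := by
    intro k
    rw [Function.update_self, Function.update_self, Function.update_idem, Function.update_idem]
  rw [Finset.sum_congr rfl fun k _ => hdiag k, Finset.sum_sub_distrib] at hdc
  linear_combination -hdc - hc - hcomm

private lemma bianchiStep (hgeo : Geo nab g e) (X : Derivation ℝ A A)
    (Z : Fin q → Derivation ℝ A A) :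
    ∑ i, ∑ m, Ω (Fin.cons (e i) (Function.update Z m (Rvec nab (Z m) (e i) X)))
      = Ω (Fin.cons (ricci nab e X) Z) := by
  calc ∑ i, ∑ m, Ω (Fin.cons (e i) (Function.update Z m (Rvec nab (Z m) (e i) X)))
      = ∑ i, ∑ m, ∑ j, g (Rvec nab X (e j) (Z m)) (e i)
          * Ω (Fin.cons (e i) (Function.update Z m (e j))) := by
        refine Finset.sum_congr rfl fun i _ => Finset.sum_congr rfl fun m _ => ?_
        conv_lhs => rw [hgeo.e_expand (Rvec nab (Z m) (e i) X)]
        rw [Fin.cons_update, Om_upd_sum Ω]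
        refine Finset.sum_congr rfl fun j _ => ?_
        rw [Om_upd_smul Ω, ← Fin.cons_update, Rg_pair nab g e hgeo (Z m) (e i) X (e j)]
    _ = ∑ m, ∑ j, ∑ i, g (Rvec nab X (e j) (Z m)) (e i)
          * Ω (Fin.cons (e i) (Function.update Z m (e j))) := by
        rw [Finset.sum_comm]
        exact Finset.sum_congr rfl fun m _ => Finset.sum_comm
    _ = ∑ m, ∑ j, Ω (Fin.cons (Rvec nab X (e j) (Z m)) (Function.update Z m (e j))) := by
        refine Finset.sum_congr rfl fun m _ => Finset.sum_congr rfl fun j _ => ?_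
        conv_rhs => rw [hgeo.e_expand (Rvec nab X (e j) (Z m))]
        rw [Om_cons_sum Ω]
        exact Finset.sum_congr rfl fun i _ => (Om_cons_smul Ω _ _ _).symm
    _ = ∑ j, ∑ m, -Ω (Fin.cons (e j) (Function.update Z m (Rvec nab X (e j) (Z m)))) := by
        rw [Finset.sum_comm]
        exact Finset.sum_congr rfl fun j _ => Finset.sum_congr rfl fun m _ =>
          Om_cons_swap Ω Z m _ _
    _ = ∑ j, Ω (Fin.cons (Rvec nab X (e j) (e j)) Z) := by
        refine Finset.sum_congr rfl fun j _ => ?_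
        have h0 := curvK nab Ω hpar X (e j) (Fin.cons (e j) Z)
        rw [Fin.sum_univ_succ] at h0
        simp only [Fin.cons_zero, Fin.cons_succ, Fin.update_cons_zero,
          ← Fin.cons_update] at h0
        rw [Finset.sum_neg_distrib]
        linear_combination -h0
    _ = Ω (Fin.cons (ricci nab e X) Z) := by
        rw [ricci, Om_cons_sum Ω]

end ParallelCore
section ParallelCore2

variable {q : ℕ}
variable (Ω : AlternatingMap A (Derivation ℝ A A) A (Fin (q + 2)))

private lemma Om_cc_upd (V x : Derivation ℝ A A) (Z : Fin q → Derivation ℝ A A)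
    (y : Derivation ℝ A A) :
    Function.update (Fin.cons V (Fin.cons x Z) : Fin (q+2) → Derivation ℝ A A) 1 y
      = Fin.cons V (Fin.cons y Z) := by
  have h1 : (1 : Fin (q+2)) = (0 : Fin (q+1)).succ := rfl
  rw [h1, ← Fin.cons_update, Fin.update_cons_zero]

private lemma Om_cc_zero (V : Derivation ℝ A A) (Z : Fin q → Derivation ℝ A A) :
    Ω (Fin.cons V (Fin.cons 0 Z)) = 0 := by
  rw [← Om_cc_upd V 0 Z 0]
  exact Ω.toMultilinearMap.map_update_zero _ _

private lemma Om_cc_add (V x y : Derivation ℝ A A) (Z : Fin q → Derivation ℝ A A) :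
    Ω (Fin.cons V (Fin.cons (x + y) Z))
      = Ω (Fin.cons V (Fin.cons x Z)) + Ω (Fin.cons V (Fin.cons y Z)) := by
  rw [← Om_cc_upd V x Z (x + y), Ω.map_update_add, Om_cc_upd V x Z x, Om_cc_upd V x Z y]

private lemma Om_cc_smul (a : A) (V x : Derivation ℝ A A) (Z : Fin q → Derivation ℝ A A) :
    Ω (Fin.cons V (Fin.cons (a • x) Z)) = a * Ω (Fin.cons V (Fin.cons x Z)) := by
  rw [← Om_cc_upd V x Z (a • x), Om_upd_smul Ω, Om_cc_upd V x Z x]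

variable (hpar : ∀ (Y : Derivation ℝ A A) (Z : Fin (q + 2) → Derivation ℝ A A),
    Y (Ω Z) = ∑ k, Ω (Function.update Z k (nab Y (Z k))))
include hpar

private lemma codiff_contr (X : Derivation ℝ A A) (Z : Fin q → Derivation ℝ A A) :
    codiffS nab e (contr X ⇑Ω) Z
      = -∑ i, Ω (Fin.cons (nab (e i) X) (Fin.cons (e i) Z)) := by
  simp only [codiffS, Pi.neg_apply, Finset.sum_apply]
  simp only [covD_contr nab Ω hpar X]
  simp only [contr]

private lemma covD_codiff_contr (hgeo : Geo nab g e) (X Y : Derivation ℝ A A)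
    (Z : Fin q → Derivation ℝ A A) :
    covD nab Y (codiffS nab e (contr X ⇑Ω)) Z
      = -∑ i, Ω (Fin.cons (sder nab X Y (e i)) (Fin.cons (e i) Z)) := by
  simp only [covD]
  simp only [codiff_contr nab e Ω hpar X]
  have hterm : ∀ i : Fin n, Y (Ω (Fin.cons (nab (e i) X) (Fin.cons (e i) Z)))
      = Ω (Fin.cons (nab Y (nab (e i) X)) (Fin.cons (e i) Z))
        + Ω (Fin.cons (nab (e i) X) (Fin.cons (nab Y (e i)) Z))
        + ∑ m, Ω (Fin.cons (nab (e i) X)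
            (Fin.cons (e i) (Function.update Z m (nab Y (Z m))))) := by
    intro i
    rw [hpar Y _, Fin.sum_univ_succ, Fin.sum_univ_succ]
    simp only [Fin.cons_zero, Fin.cons_succ, Fin.update_cons_zero, ← Fin.cons_update]
    ring
  rw [map_neg, map_sum, Finset.sum_congr rfl fun i _ => hterm i,
    Finset.sum_add_distrib, Finset.sum_add_distrib, Finset.sum_neg_distrib]
  have hcomm2 : ∑ k : Fin q, ∑ i : Fin n,
      Ω (Fin.cons (nab (e i) X) (Fin.cons (e i) (Function.update Z k (nab Y (Z k)))))
      = ∑ i : Fin n, ∑ k : Fin q,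
      Ω (Fin.cons (nab (e i) X) (Fin.cons (e i) (Function.update Z k (nab Y (Z k))))) :=
    Finset.sum_comm
  have hft := frame_trick nab g e hgeo
    (fun V W => Ω (Fin.cons V (Fin.cons W Z)))
    (fun x => Om_cc_zero Ω x Z) (fun x y z => Om_cc_add Ω x y z Z)
    (fun a x w => Om_cc_smul Ω a x w Z)
    (fun w => Om_cons_zero Ω _) (fun x y w => Om_cons_add Ω x y _)
    (fun a x w => Om_cons_smul Ω a x _)
    X Y
  have hsub : ∑ i, Ω (Fin.cons (sder nab X Y (e i)) (Fin.cons (e i) Z))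
      = ∑ i, Ω (Fin.cons (nab Y (nab (e i) X)) (Fin.cons (e i) Z))
        - ∑ i, Ω (Fin.cons (nab (nab Y (e i)) X) (Fin.cons (e i) Z)) := by
    rw [← Finset.sum_sub_distrib]
    refine Finset.sum_congr rfl fun i _ => ?_
    simp only [sder, Om_cons_sub]
  linear_combination -hft + hsub + hcomm2

private lemma extd_codiff_contr (hgeo : Geo nab g e) (X : Derivation ℝ A A)
    (Z : Fin (q+1) → Derivation ℝ A A) :
    extd nab (codiffS nab e (contr X ⇑Ω)) Z
      = ∑ i, ∑ m, Ω (Fin.cons (e i) (Function.update Z m (sder nab X (Z m) (e i)))) := by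
  simp only [extd]
  simp only [covD_codiff_contr nab g e Ω hpar hgeo X]
  refine Eq.trans ?_ Finset.sum_comm
  refine Finset.sum_congr rfl fun m _ => ?_
  rw [mul_neg, Finset.mul_sum, ← Finset.sum_neg_distrib]
  refine Finset.sum_congr rfl fun i _ => ?_
  have hW1 : (Fin.cons (e i) (Function.update Z m (sder nab X (Z m) (e i)))
      : Fin (q+2) → Derivation ℝ A A) m.succ = sder nab X (Z m) (e i) := by
    rw [Fin.cons_succ, Function.update_self]
  have hW2 : (Fin.cons (e i) (Function.update Z m (sder nab X (Z m) (e i)))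
        : Fin (q+2) → Derivation ℝ A A) ∘ (m.succ).succAbove
      = Fin.cons (e i) (Z ∘ m.succAbove) := by
    funext x
    cases x using Fin.cases with
    | zero =>
        rw [Function.comp_apply, Fin.succ_succAbove_zero, Fin.cons_zero, Fin.cons_zero]
    | succ j =>
        rw [Function.comp_apply, Fin.succ_succAbove_succ, Fin.cons_succ, Fin.cons_succ,
          Function.update_of_ne (Fin.succAbove_ne m j), Function.comp_apply]
  have hmv := Om_move Ω (Fin.cons (e i) (Function.update Z m (sder nab X (Z m) (e i)))) m.succ
  rw [hW1, hW2, Fin.val_succ] at hmv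
  rw [hmv, pow_succ]
  ring

end ParallelCore2
section OneForm

variable (hgeo : Geo nab g e)
include hgeo

private lemma sharp_flat (V : Derivation ℝ A A) : sharp e (flat g V) = V := by
  simp only [sharp, flat]
  exact (hgeo.e_expand V).symm

private lemma covD_flat (X Y : Derivation ℝ A A) :
    covD nab Y (flat g X) = flat g (nab Y X) := by
  funext Z
  simp only [covD, flat, Fin.sum_univ_one, Function.update_self]
  rw [hgeo.nab_metric]; ring

private lemma extd_flat (X : Derivation ℝ A A) (Z : Fin 2 → Derivation ℝ A A) :
    extd nab (flat g X) Z = g (nab (Z 0) X) (Z 1) - g (nab (Z 1) X) (Z 0) := by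
  simp only [extd, covD_flat nab g e hgeo X, flat]
  rw [Fin.sum_univ_two]
  have h0 : ((Z ∘ (0 : Fin 2).succAbove) 0 : Derivation ℝ A A) = Z 1 := rfl
  have h1 : ((Z ∘ (1 : Fin 2).succAbove) 0 : Derivation ℝ A A) = Z 0 := rfl
  rw [h0, h1]
  norm_num
  ring

private lemma covD_extd_flat (X Y : Derivation ℝ A A) (Z : Fin 2 → Derivation ℝ A A) :
    covD nab Y (extd nab (flat g X)) Z
      = g (sder nab X Y (Z 0)) (Z 1) - g (sder nab X Y (Z 1)) (Z 0) := by
  simp only [covD, extd_flat nab g e hgeo X]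
  rw [Fin.sum_univ_two]
  simp only [Function.update_self, Function.update_of_ne (show (1:Fin 2) ≠ 0 by decide),
    Function.update_of_ne (show (0:Fin 2) ≠ 1 by decide)]
  rw [map_sub, hgeo.nab_metric Y (nab (Z 0) X) (Z 1), hgeo.nab_metric Y (nab (Z 1) X) (Z 0)]
  simp only [sder, g_sub₁ nab g e hgeo]
  ring

private lemma dsd_flat (X : Derivation ℝ A A) (Z : Fin 1 → Derivation ℝ A A) :
    codiffS nab e (extd nab (flat g X)) Z
      = g (-(∑ i, sder nab X (e i) (e i))) (Z 0)
        + ∑ i, g (sder nab X (e i) (Z 0)) (e i) := by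
  simp only [codiffS, Pi.neg_apply, Finset.sum_apply, contr]
  simp only [covD_extd_flat nab g e hgeo X]
  simp only [Fin.cons_zero, Fin.cons_one]
  rw [Finset.sum_sub_distrib, g_neg₁ nab g e hgeo, g_sum₁ nab g e hgeo]
  ring

private lemma star_flat (X : Derivation ℝ A A) (Z : Fin 0 → Derivation ℝ A A) :
    codiffS nab e (flat g X) Z = -∑ i, g (nab (e i) X) (e i) := by
  simp only [codiffS, Pi.neg_apply, Finset.sum_apply, contr]
  simp only [covD_flat nab g e hgeo X]
  simp only [flat, Fin.cons_zero]

private lemma dds_flat (X : Derivation ℝ A A) (Z : Fin 1 → Derivation ℝ A A) :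
    extd nab (codiffS nab e (flat g X)) Z
      = -∑ i, g (sder nab X (Z 0) (e i)) (e i) := by
  simp only [extd, covD, Fin.sum_univ_succ, Finset.univ_eq_empty, Finset.sum_empty,
    sub_zero, add_zero, Fin.val_zero, pow_zero, one_mul]
  rw [star_flat nab g e hgeo X]
  rw [map_neg, map_sum]
  have hm : ∀ i, (Z 0) (g (nab (e i) X) (e i))
      = g (nab (Z 0) (nab (e i) X)) (e i) + g (nab (e i) X) (nab (Z 0) (e i)) :=
    fun i => hgeo.nab_metric _ _ _
  rw [Finset.sum_congr rfl fun i _ => hm i, Finset.sum_add_distrib]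
  have hft := frame_trick nab g e hgeo g
    (fun x => g_zero₂ nab g e hgeo x) (fun x y z => g_add₂ nab g e hgeo x y z)
    (fun a x w => g_smul₂ nab g e hgeo a x w)
    (fun w => g_zero₁ nab g e hgeo w) (fun x y w => hgeo.g_add x y w)
    (fun a x w => hgeo.g_smul a x w)
    X (Z 0)
  have hsd : ∑ i, g (sder nab X (Z 0) (e i)) (e i)
      = ∑ i, g (nab (Z 0) (nab (e i) X)) (e i)
        - ∑ i, g (nab (nab (Z 0) (e i)) X) (e i) := by
    rw [← Finset.sum_sub_distrib]
    exact Finset.sum_congr rfl fun i _ => by simp only [sder, g_sub₁ nab g e hgeo]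
  linear_combination -hft + hsd

private lemma hodgeLap_flat (X : Derivation ℝ A A) :
    hodgeLap nab e (flat g X)
      = flat g ((-(∑ i, sder nab X (e i) (e i))) + ricci nab e X) := by
  have hred : hodgeLap nab e (flat g X)
      = codiffS nab e (extd nab (flat g X)) + extd nab (codiffS nab e (flat g X)) := rfl
  rw [hred]
  funext Z
  rw [Pi.add_apply, dsd_flat nab g e hgeo X Z, dds_flat nab g e hgeo X Z]
  simp only [flat]
  rw [hgeo.g_add]
  have hper : ∀ i, g (sder nab X (e i) (Z 0)) (e i) - g (sder nab X (Z 0) (e i)) (e i)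
      = g (Rvec nab X (e i) (e i)) (Z 0) := by
    intro i
    rw [← g_sub₁ nab g e hgeo, sder_sub nab g e hgeo, Rg_pair nab g e hgeo (e i) (Z 0) X (e i)]
  have hric : ∑ i, g (Rvec nab X (e i) (e i)) (Z 0)
      = ∑ i, g (sder nab X (e i) (Z 0)) (e i) - ∑ i, g (sder nab X (Z 0) (e i)) (e i) := by
    rw [← Finset.sum_sub_distrib]
    exact Finset.sum_congr rfl fun i _ => (hper i).symm
  rw [ricci, g_sum₁ nab g e hgeo]
  linear_combination -hric

end OneForm

/-- Corollary 2.6 (ii): for a vector field `X` and a *parallel* `p`-form `ω`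
(`p ≥ 1`, here of degree `p + 1`), the Hodge Laplacian `Δ = d d* + d* d`
satisfies `Δ(ι(X)ω) = ι(ΔX)ω`, where `X` is identified with its metric-dual
`1`-form `X♭` and `ΔX` denotes the vector field dual to `Δ(X♭)`. -/
theorem hodgeLap_contract_parallel
    -- the metric
    (hg_symm : ∀ X Y : Derivation ℝ A A, g X Y = g Y X)
    (hg_add : ∀ X Y Z : Derivation ℝ A A, g (X + Y) Z = g X Z + g Y Z)
    (hg_smul : ∀ (a : A) (X Y : Derivation ℝ A A), g (a • X) Y = a * g X Y)
    -- the Levi-Civita connection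
    (hnab_add₁ : ∀ X Y Z : Derivation ℝ A A, nab (X + Y) Z = nab X Z + nab Y Z)
    (hnab_smul₁ : ∀ (a : A) (X Y : Derivation ℝ A A), nab (a • X) Y = a • nab X Y)
    (hnab_add₂ : ∀ X Y Z : Derivation ℝ A A, nab X (Y + Z) = nab X Y + nab X Z)
    (hnab_leibniz : ∀ (a : A) (X Y : Derivation ℝ A A),
      nab X (a • Y) = X a • Y + a • nab X Y)
    (hnab_metric : ∀ X Y Z : Derivation ℝ A A,
      X (g Y Z) = g (nab X Y) Z + g Y (nab X Z))
    (hnab_torsion : ∀ X Y : Derivation ℝ A A, nab X Y - nab Y X = ⁅X, Y⁆)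
    -- the orthonormal frame
    (he_orth : ∀ i j, g (e i) (e j) = if i = j then 1 else 0)
    (he_expand : ∀ X : Derivation ℝ A A, X = ∑ i, g X (e i) • e i)
    -- a parallel `p`-form, `p ≥ 1` (degree `p + 1` below)
    (p : ℕ) (ω : Forms A (p + 1))
    (hω_add : ∀ (Z : Fin (p + 1) → Derivation ℝ A A) (i : Fin (p + 1))
      (x y : Derivation ℝ A A),
      ω (Function.update Z i (x + y)) =
        ω (Function.update Z i x) + ω (Function.update Z i y))
    (hω_smul : ∀ (Z : Fin (p + 1) → Derivation ℝ A A) (i : Fin (p + 1))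
      (a : A) (x : Derivation ℝ A A),
      ω (Function.update Z i (a • x)) = a * ω (Function.update Z i x))
    (hω_alt : ∀ (Z : Fin (p + 1) → Derivation ℝ A A) (i j : Fin (p + 1)),
      i ≠ j → Z i = Z j → ω Z = 0)
    (hω_par : ∀ Y : Derivation ℝ A A, covD nab Y ω = 0)
    (X : Derivation ℝ A A) :
    hodgeLap nab e (contr X ω) =
      contr (sharp e (hodgeLap nab e (flat g X))) ω := by
  have hgeo : Geo nab g e :=
    ⟨hg_symm, hg_add, hg_smul, hnab_add₁, hnab_smul₁, hnab_add₂, hnab_leibniz,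
      hnab_metric, hnab_torsion, he_orth, he_expand⟩
  let Ω : AlternatingMap A (Derivation ℝ A A) A (Fin (p + 1)) :=
    { toFun := ω
      map_update_add' := by
        intro inst Z i x y
        have hi : inst = instDecidableEqFin (p + 1) := Subsingleton.elim _ _
        subst hi
        exact hω_add Z i x y
      map_update_smul' := by
        intro inst Z i a x
        have hi : inst = instDecidableEqFin (p + 1) := Subsingleton.elim _ _
        subst hi
        simpa [smul_eq_mul] using hω_smul Z i a x
      map_eq_zero_of_eq' := fun v i j h hij => hω_alt v i j hij h }
  have hpar : ∀ (Y : Derivation ℝ A A) (Z : Fin (p + 1) → Derivation ℝ A A),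
      Y (Ω Z) = ∑ k, Ω (Function.update Z k (nab Y (Z k))) := by
    intro Y Z
    have h := congrFun (hω_par Y) Z
    simp only [covD, Pi.zero_apply] at h
    exact sub_eq_zero.mp h
  rw [hodgeLap_flat nab g e hgeo X, sharp_flat nab g e hgeo]
  rw [show ω = ⇑Ω from rfl]
  cases p with
  | zero =>
    funext Z
    have hred : hodgeLap nab e (contr X ⇑Ω) = codiffS nab e (extd nab (contr X ⇑Ω)) := rfl
    rw [hred, dsd_contr nab e Ω hpar X Z]
    have hb := bianchiStep nab g e Ω hpar hgeo X Z
    simp only [Finset.univ_eq_empty, Finset.sum_empty, Finset.sum_const_zero, sub_zero] at hb ⊢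
    simp only [contr]
    rw [Om_cons_add Ω, ← hb, add_zero]
  | succ k =>
    funext Z
    have hred : hodgeLap nab e (contr X ⇑Ω)
        = codiffS nab e (extd nab (contr X ⇑Ω)) + extd nab (codiffS nab e (contr X ⇑Ω)) := rfl
    rw [hred, Pi.add_apply, dsd_contr nab e Ω hpar X Z,
      extd_codiff_contr nab g e Ω hpar hgeo X Z]
    have hcomb : ∀ (i : Fin n) (m : Fin (k + 1)),
        Ω (Fin.cons (e i) (Function.update Z m (sder nab X (Z m) (e i))))
          - Ω (Fin.cons (e i) (Function.update Z m (sder nab X (e i) (Z m))))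
        = Ω (Fin.cons (e i) (Function.update Z m (Rvec nab (Z m) (e i) X))) := by
      intro i m
      rw [Fin.cons_update, Fin.cons_update, Fin.cons_update, ← Om_upd_sub Ω,
        sder_sub nab g e hgeo]
    have hsum : ∑ i, ∑ m, Ω (Fin.cons (e i) (Function.update Z m (sder nab X (Z m) (e i))))
          - ∑ i, ∑ m, Ω (Fin.cons (e i) (Function.update Z m (sder nab X (e i) (Z m))))
        = ∑ i, ∑ m, Ω (Fin.cons (e i) (Function.update Z m (Rvec nab (Z m) (e i) X))) := by
      rw [← Finset.sum_sub_distrib]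
      refine Finset.sum_congr rfl fun i _ => ?_
      rw [← Finset.sum_sub_distrib]
      exact Finset.sum_congr rfl fun m _ => hcomb i m
    have hb := bianchiStep nab g e Ω hpar hgeo X Z
    simp only [contr]
    rw [Om_cons_add Ω]
    linear_combination hsum + hb

end RiemannModel
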